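/- Assume [E : F] = 2, that the sequence (d_i)_{i ≥ 2} is not constant (where d_i = dim_F(C_i ∩ L_1)), that D₀ = {i ≥ 2 : d_i = 0} is infinite, and that the differences between consecutive elements of D₀ are bounded with maximum r. Then L is ideally r-constrained but L is not ideally (r−1)-constrained. -/

import Mathlib

open Submodule

/-- The `i`-th two-step centraliser `C_i = {a ∈ M_1 | ⁅a, u⁆ = 0 for all u ∈ M_i}`. -/
def twoStepCentraliser {E : Type*} [Field E] {M : Type*} [LieRing M] [LieAlgebra E M]
    (Mc : ℕ → Submodule E M) (i : ℕ) : Submodule E M where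
  carrier := {a : M | a ∈ Mc 1 ∧ ∀ u ∈ Mc i, ⁅a, u⁆ = 0}
  add_mem' := by
    rintro a b ⟨ha1, ha2⟩ ⟨hb1, hb2⟩
    exact ⟨add_mem ha1 hb1, fun u hu => by rw [add_lie, ha2 u hu, hb2 u hu, add_zero]⟩
  zero_mem' := ⟨zero_mem _, fun u _ => zero_lie u⟩
  smul_mem' := by
    rintro c a ⟨ha1, ha2⟩
    exact ⟨Submodule.smul_mem _ c ha1, fun u hu => by rw [smul_lie, ha2 u hu, smul_zero]⟩

/-- `Mc` is a grading of `M` as a graded Lie algebra of maximal class over `E`,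
generated in degree 1. -/
structure IsMaximalClass (E : Type*) [Field E] (M : Type*) [LieRing M] [LieAlgebra E M]
    (Mc : ℕ → Submodule E M) : Prop where
  zero_bot : Mc 0 = ⊥
  internal : DirectSum.IsInternal Mc
  lie_mem : ∀ i j : ℕ, ∀ x ∈ Mc i, ∀ y ∈ Mc j, ⁅x, y⁆ ∈ Mc (i + j)
  finrank_one : Module.finrank E ↥(Mc 1) = 2
  finrank_eq_one : ∀ i : ℕ, 2 ≤ i → Module.finrank E ↥(Mc i) = 1
  span_succ : ∀ i : ℕ, 1 ≤ i →
    Mc (i + 1) = Submodule.span E {z : M | ∃ v ∈ Mc i, ∃ a ∈ Mc 1, z = ⁅v, a⁆}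

/-- The homogeneous components of the Lie `F`-subalgebra generated by `X` and `Y` in
degree 1:  `L_1 = span_F {X, Y}` and `L_{i+1} = span_F {⁅v, a⁆ : v ∈ L_i, a ∈ L_1}`. -/
def Lcomp (F : Type*) [Field F] {M : Type*} [LieRing M] [Module F M]
    (X Y : M) : ℕ → Submodule F M
  | 0 => ⊥
  | 1 => Submodule.span F {X, Y}
  | (i + 2) => Submodule.span F
      {z : M | ∃ v ∈ Lcomp F X Y (i + 1), ∃ a ∈ Submodule.span F ({X, Y} : Set M), z = ⁅v, a⁆}

/-- `d_i = dim_F (C_i ∩ L_1)`. -/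
noncomputable def dSeq (E : Type*) [Field E] {M : Type*} [LieRing M] [LieAlgebra E M]
    (Mc : ℕ → Submodule E M) (F : Type*) [Field F] [Algebra F E] [LieAlgebra F M]
    [IsScalarTower F E M] (X Y : M) (i : ℕ) : ℕ :=
  Module.finrank F
    ↥(Submodule.restrictScalars F (twoStepCentraliser Mc i) ⊓ Lcomp F X Y 1)

/-- `L^j = ⊕_{i ≥ j} L_i`. -/
def Lpow (F : Type*) [Field F] {M : Type*} [LieRing M] [Module F M]
    (X Y : M) (j : ℕ) : Submodule F M :=
  ⨆ i : ℕ, ⨆ _ : j ≤ i, Lcomp F X Y i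

/-- `I` is a graded ideal of `L`: a Lie ideal of `L` equal to `⊕_{i ≥ 1} (I ∩ L_i)`. -/
def IsGradedIdealL (F : Type*) [Field F] {M : Type*} [LieRing M] [Module F M]
    (X Y : M) (I : Submodule F M) : Prop :=
  (∀ x ∈ (⨆ i : ℕ, Lcomp F X Y i : Submodule F M), ∀ y ∈ I, ⁅x, y⁆ ∈ I) ∧
  I = ⨆ i : ℕ, ⨆ _ : 1 ≤ i, (I ⊓ Lcomp F X Y i)

/-- `L` is ideally `s`-constrained: every nonzero graded ideal `I` of `L` satisfies
`L^i ⊇ I ⊇ L^{i+s}` for some `i ≥ 1`. -/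
def IdeallyConstrained (F : Type*) [Field F] {M : Type*} [LieRing M] [Module F M]
    (X Y : M) (s : ℕ) : Prop :=
  ∀ I : Submodule F M, IsGradedIdealL F X Y I → I ≠ ⊥ →
    ∃ i : ℕ, 1 ≤ i ∧ I ≤ Lpow F X Y i ∧ Lpow F X Y (i + s) ≤ I


section Aux

open Module

variable {E : Type*} [Field E] {M : Type*} [LieRing M] [LieAlgebra E M]
  {Mc : ℕ → Submodule E M}
  {F : Type*} [Field F] [Algebra F E] [LieAlgebra F M] [IsScalarTower F E M]
  {X Y : M}

/-- The bracket map `a ↦ ⁅v, a⁆` on `L₁ = span_F {X, Y}`. -/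
def brMap (F : Type*) [Field F] {M : Type*} [LieRing M] [LieAlgebra F M] (X Y v : M) :
    ↥(Submodule.span F ({X, Y} : Set M)) →ₗ[F] M where
  toFun a := ⁅v, (a : M)⁆
  map_add' a b := by simp [lie_add]
  map_smul' c a := by simp [lie_smul]

@[simp] lemma brMap_apply (v : M) (a : ↥(Submodule.span F ({X, Y} : Set M))) :
    brMap F X Y v a = ⁅v, (a : M)⁆ := rfl

lemma Lcomp_one : Lcomp F X Y 1 = Submodule.span F ({X, Y} : Set M) := rfl

lemma Lcomp_succ (k : ℕ) (hk : 1 ≤ k) :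
    Lcomp F X Y (k + 1) = Submodule.span F
      {z : M | ∃ v ∈ Lcomp F X Y k, ∃ a ∈ Submodule.span F ({X, Y} : Set M), z = ⁅v, a⁆} := by
  match k, hk with
  | (k + 1), _ => rfl

lemma fd_FE (hEF : Module.finrank F E = 2) : FiniteDimensional F E :=
  FiniteDimensional.of_finrank_eq_succ hEF

lemma fd_McE (hM : IsMaximalClass E M Mc) (i : ℕ) : FiniteDimensional E ↥(Mc i) := by
  match i with
  | 0 => rw [hM.zero_bot]; infer_instance
  | 1 => exact FiniteDimensional.of_finrank_eq_succ hM.finrank_one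
  | (i + 2) =>
    exact FiniteDimensional.of_finrank_eq_succ (hM.finrank_eq_one _ (by omega))

lemma fd_McF (hM : IsMaximalClass E M Mc) (hEF : Module.finrank F E = 2) (i : ℕ) :
    FiniteDimensional F ↥((Mc i).restrictScalars F) := by
  haveI := fd_FE (F := F) hEF
  haveI := fd_McE hM i
  haveI : Module.Finite F ↥(Mc i) := Module.Finite.trans E ↥(Mc i)
  exact Module.Finite.equiv ((Submodule.restrictScalarsEquiv F E M (Mc i)).restrictScalars F).symm

lemma finrank_restrictScalars (p : Submodule E M) :
    Module.finrank F ↥(p.restrictScalars F) = Module.finrank F ↥p :=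
  LinearEquiv.finrank_eq ((Submodule.restrictScalarsEquiv F E M p).restrictScalars F)

lemma finrank_McF (hM : IsMaximalClass E M Mc) (hEF : Module.finrank F E = 2)
    {i : ℕ} (hi : 2 ≤ i) : Module.finrank F ↥((Mc i).restrictScalars F) = 2 := by
  haveI := fd_FE (F := F) hEF
  haveI := fd_McE hM i
  rw [finrank_restrictScalars, ← Module.finrank_mul_finrank F E ↥(Mc i),
    hM.finrank_eq_one i hi, hEF]

lemma Mc_exists_ne_zero (hM : IsMaximalClass E M Mc) {i : ℕ} (hi : 2 ≤ i) :
    ∃ v : M, v ∈ Mc i ∧ v ≠ 0 := by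
  apply Submodule.exists_mem_ne_zero_of_ne_bot
  intro h
  have := hM.finrank_eq_one i hi
  rw [h, finrank_bot] at this
  omega

lemma Mc_eq_spanE (hM : IsMaximalClass E M Mc) {i : ℕ} (hi : 2 ≤ i) {v : M}
    (hv : v ∈ Mc i) (hv0 : v ≠ 0) : Mc i = Submodule.span E {v} := by
  haveI := fd_McE hM i
  refine (Submodule.eq_of_le_of_finrank_le ((Submodule.span_le).2 ?_) ?_).symm
  · simpa using hv
  · rw [hM.finrank_eq_one i hi, finrank_span_singleton hv0]


lemma hXYF (hXY : LinearIndependent E ![X, Y]) : LinearIndependent F ![X, Y] := by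
  apply hXY.restrict_scalars
  intro a b hab
  have : algebraMap F E a = algebraMap F E b := by
    simpa [Algebra.algebraMap_eq_smul_one] using hab
  exact (algebraMap F E).injective this

lemma span_XY_eq_range : ({X, Y} : Set M) = Set.range ![X, Y] := by
  ext z
  simp [Matrix.range_cons, Matrix.range_empty]
  tauto

lemma fd_L1 : FiniteDimensional F ↥(Submodule.span F ({X, Y} : Set M)) :=
  FiniteDimensional.span_of_finite F (Set.toFinite _)

lemma finrank_L1 (hXY : LinearIndependent E ![X, Y]) :
    Module.finrank F ↥(Submodule.span F ({X, Y} : Set M)) = 2 := by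
  rw [span_XY_eq_range, finrank_span_eq_card (hXYF hXY)]
  simp

lemma Mc1_eq_spanE (hM : IsMaximalClass E M Mc) (hX : X ∈ Mc 1) (hY : Y ∈ Mc 1)
    (hXY : LinearIndependent E ![X, Y]) :
    Mc 1 = Submodule.span E ({X, Y} : Set M) := by
  haveI := fd_McE hM 1
  refine (Submodule.eq_of_le_of_finrank_le ((Submodule.span_le).2 ?_) ?_).symm
  · intro z hz
    rcases hz with h | h
    · subst h; exact hX
    · simp only [Set.mem_singleton_iff] at h; subst h; exact hY
  · rw [hM.finrank_one, span_XY_eq_range, finrank_span_eq_card hXY]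
    simp

lemma lie_mem_spanE_XY (hM : IsMaximalClass E M Mc) (hX : X ∈ Mc 1) (hY : Y ∈ Mc 1)
    (hXY : LinearIndependent E ![X, Y]) {v a : M} (hv : v ∈ Mc 1) (ha : a ∈ Mc 1) :
    ⁅v, a⁆ ∈ Submodule.span E ({⁅X, Y⁆} : Set M) := by
  rw [Mc1_eq_spanE hM hX hY hXY] at hv ha
  rcases Submodule.mem_span_pair.1 hv with ⟨c₁, c₂, rfl⟩
  rcases Submodule.mem_span_pair.1 ha with ⟨c₃, c₄, rfl⟩
  have expand : ⁅c₁ • X + c₂ • Y, c₃ • X + c₄ • Y⁆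
      = (c₁ * c₄ - c₂ * c₃) • ⁅X, Y⁆ := by
    simp only [lie_add, add_lie, lie_smul, smul_lie, smul_smul, lie_self, smul_zero,
      ← lie_skew X Y]
    module
  rw [expand]
  exact Submodule.smul_mem _ _ (Submodule.mem_span_singleton_self _)

lemma lieXY_ne_zero (hM : IsMaximalClass E M Mc) (hX : X ∈ Mc 1) (hY : Y ∈ Mc 1)
    (hXY : LinearIndependent E ![X, Y]) : ⁅X, Y⁆ ≠ 0 := by
  intro h
  have h2 : Mc 2 ≤ Submodule.span E ({⁅X, Y⁆} : Set M) := by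
    rw [hM.span_succ 1 le_rfl]
    apply Submodule.span_le.2
    rintro z ⟨v, hv, a, ha, rfl⟩
    exact lie_mem_spanE_XY hM hX hY hXY hv ha
  rw [h, Submodule.span_zero_singleton] at h2
  have hb : Mc 2 = ⊥ := le_bot_iff.1 h2
  have := hM.finrank_eq_one 2 le_rfl
  rw [hb, finrank_bot] at this
  omega

lemma X_ne_zero (hXY : LinearIndependent E ![X, Y]) : X ≠ 0 := by
  intro h
  exact (hXY.ne_zero 0) (by simpa using h)

/-- In degree `≥ 2`, a nonzero element does not commute with both `X` and `Y`. -/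
lemma nonvanish (hM : IsMaximalClass E M Mc) (hX : X ∈ Mc 1) (hY : Y ∈ Mc 1)
    (hXY : LinearIndependent E ![X, Y]) {k : ℕ} (hk : 2 ≤ k) {v : M}
    (hv : v ∈ Mc k) (hv0 : v ≠ 0) : ⁅v, X⁆ ≠ 0 ∨ ⁅v, Y⁆ ≠ 0 := by
  by_contra h
  push_neg at h
  obtain ⟨h1, h2⟩ := h
  have hbot : Mc (k + 1) ≤ ⊥ := by
    rw [hM.span_succ k (by omega)]
    apply Submodule.span_le.2
    rintro z ⟨u, hu, a, ha, rfl⟩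
    have hu' : u ∈ Submodule.span E ({v} : Set M) := by
      rw [← Mc_eq_spanE hM hk hv hv0]; exact hu
    rcases Submodule.mem_span_singleton.1 hu' with ⟨c, rfl⟩
    have ha' : a ∈ Submodule.span E ({X, Y} : Set M) := by
      rw [← Mc1_eq_spanE hM hX hY hXY]; exact ha
    rcases Submodule.mem_span_pair.1 ha' with ⟨c₃, c₄, rfl⟩
    have : ⁅c • v, c₃ • X + c₄ • Y⁆ = (c * c₃) • ⁅v, X⁆ + (c * c₄) • ⁅v, Y⁆ := by
      simp only [lie_add, smul_lie, lie_smul, smul_smul]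
      module
    rw [SetLike.mem_coe, this, h1, h2]
    simp
  have := hM.finrank_eq_one (k + 1) (by omega)
  rw [le_bot_iff.1 hbot, finrank_bot] at this
  omega

lemma L1_le_Mc1 (hX : X ∈ Mc 1) (hY : Y ∈ Mc 1) :
    Submodule.span F ({X, Y} : Set M) ≤ (Mc 1).restrictScalars F := by
  apply Submodule.span_le.2
  rintro z (h | h)
  · subst h; exact hX
  · simp only [Set.mem_singleton_iff] at h; subst h; exact hY

lemma Lc_le_Mc (hX : X ∈ Mc 1) (hY : Y ∈ Mc 1) (hM : IsMaximalClass E M Mc) :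
    ∀ i, Lcomp F X Y i ≤ (Mc i).restrictScalars F := by
  intro i
  induction i using Nat.strong_induction_on with
  | _ i ih =>
    match i with
    | 0 => simp [Lcomp]
    | 1 => exact L1_le_Mc1 hX hY
    | (i + 2) =>
      apply Submodule.span_le.2
      rintro z ⟨v, hv, a, ha, rfl⟩
      have hv' : v ∈ Mc (i + 1) := ih (i + 1) (by omega) hv
      have ha' : a ∈ Mc 1 := L1_le_Mc1 (F := F) hX hY ha
      exact hM.lie_mem _ _ v hv' a ha'


lemma X_mem_L1 : X ∈ Submodule.span F ({X, Y} : Set M) :=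
  Submodule.subset_span (Or.inl rfl)

lemma Y_mem_L1 : Y ∈ Submodule.span F ({X, Y} : Set M) :=
  Submodule.subset_span (Or.inr rfl)

lemma range_brMap_le_Mc (hM : IsMaximalClass E M Mc) (hX : X ∈ Mc 1) (hY : Y ∈ Mc 1)
    {k : ℕ} {v : M} (hv : v ∈ Mc k) :
    LinearMap.range (brMap F X Y v) ≤ (Mc (k + 1)).restrictScalars F := by
  rintro z ⟨a, rfl⟩
  exact hM.lie_mem _ _ v hv _ (L1_le_Mc1 (F := F) hX hY a.2)

lemma span_bracket_singleton (v : M) :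
    Submodule.span F {z : M | ∃ x ∈ Submodule.span F ({v} : Set M),
      ∃ a ∈ Submodule.span F ({X, Y} : Set M), z = ⁅x, a⁆}
      = LinearMap.range (brMap F X Y v) := by
  apply le_antisymm
  · apply Submodule.span_le.2
    rintro z ⟨x, hx, a, ha, rfl⟩
    rcases Submodule.mem_span_singleton.1 hx with ⟨c, rfl⟩
    refine ⟨c • ⟨a, ha⟩, ?_⟩
    simp [smul_lie, lie_smul]
  · rintro z ⟨a, rfl⟩
    exact Submodule.subset_span ⟨v, Submodule.mem_span_singleton_self v, a, a.2, rfl⟩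

lemma ker_brMap (hM : IsMaximalClass E M Mc) (hX : X ∈ Mc 1) (hY : Y ∈ Mc 1)
    {k : ℕ} (hk : 2 ≤ k) {v : M} (hv : v ∈ Mc k) (hv0 : v ≠ 0) :
    LinearMap.ker (brMap F X Y v) =
      Submodule.comap (Submodule.span F ({X, Y} : Set M)).subtype
        ((twoStepCentraliser Mc k).restrictScalars F) := by
  ext a
  simp only [LinearMap.mem_ker, brMap_apply, Submodule.mem_comap, Submodule.coe_subtype,
    Submodule.restrictScalars_mem]
  constructor
  · intro h
    refine ⟨L1_le_Mc1 (F := F) hX hY a.2, fun u hu => ?_⟩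
    have hu' : u ∈ Submodule.span E ({v} : Set M) := by
      rw [← Mc_eq_spanE hM hk hv hv0]; exact hu
    rcases Submodule.mem_span_singleton.1 hu' with ⟨c, rfl⟩
    have hav : ⁅(a : M), v⁆ = 0 := by rw [← lie_skew, h, neg_zero]
    rw [lie_smul, hav, smul_zero]
  · intro h
    have hav := h.2 v hv
    rw [← lie_skew, hav, neg_zero]

lemma finrank_ker_brMap (hM : IsMaximalClass E M Mc) (hX : X ∈ Mc 1) (hY : Y ∈ Mc 1)
    {k : ℕ} (hk : 2 ≤ k) {v : M} (hv : v ∈ Mc k) (hv0 : v ≠ 0) :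
    Module.finrank F ↥(LinearMap.ker (brMap F X Y v)) = dSeq E Mc F X Y k := by
  rw [ker_brMap hM hX hY hk hv hv0]
  set L1 := Submodule.span F ({X, Y} : Set M)
  set q := (twoStepCentraliser Mc k).restrictScalars F
  have h1 : Submodule.map L1.subtype (Submodule.comap L1.subtype q) = L1 ⊓ q :=
    Submodule.map_comap_subtype _ _
  have h2 : Module.finrank F ↥(Submodule.comap L1.subtype q)
      = Module.finrank F ↥(Submodule.map L1.subtype (Submodule.comap L1.subtype q)) :=
    LinearEquiv.finrank_eq
      (Submodule.equivMapOfInjective _ (Submodule.injective_subtype L1) _)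
  rw [h2, h1, dSeq, inf_comm]
  rfl

lemma finrank_range_brMap (hM : IsMaximalClass E M Mc) (hX : X ∈ Mc 1) (hY : Y ∈ Mc 1)
    (hXY : LinearIndependent E ![X, Y])
    {k : ℕ} (hk : 2 ≤ k) {v : M} (hv : v ∈ Mc k) (hv0 : v ≠ 0) :
    Module.finrank F ↥(LinearMap.range (brMap F X Y v)) = 2 - dSeq E Mc F X Y k := by
  haveI := fd_L1 (F := F) (X := X) (Y := Y)
  have h := LinearMap.finrank_range_add_finrank_ker (brMap F X Y v)
  rw [finrank_ker_brMap hM hX hY hk hv hv0, finrank_L1 hXY] at h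
  omega

lemma d_le_one (hM : IsMaximalClass E M Mc) (hX : X ∈ Mc 1) (hY : Y ∈ Mc 1)
    (hXY : LinearIndependent E ![X, Y]) (hEF : Module.finrank F E = 2)
    {k : ℕ} (hk : 2 ≤ k) : dSeq E Mc F X Y k ≤ 1 := by
  obtain ⟨v, hv, hv0⟩ := Mc_exists_ne_zero hM hk
  haveI := fd_L1 (F := F) (X := X) (Y := Y)
  have h := LinearMap.finrank_range_add_finrank_ker (brMap F X Y v)
  rw [finrank_ker_brMap hM hX hY hk hv hv0, finrank_L1 (F := F) hXY] at h
  by_contra hd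
  have hd2 : dSeq E Mc F X Y k = 2 := by omega
  have hr0 : Module.finrank F ↥(LinearMap.range (brMap F X Y v)) = 0 := by omega
  haveI := fd_McF hM hEF (F := F) (k + 1)
  haveI : FiniteDimensional F ↥(LinearMap.range (brMap F X Y v)) :=
    Submodule.finiteDimensional_of_le (range_brMap_le_Mc hM hX hY hv)
  have hbot : LinearMap.range (brMap F X Y v) = ⊥ := Submodule.finrank_eq_zero.1 hr0
  have hx : ⁅v, X⁆ = 0 := by
    have : brMap F X Y v ⟨X, X_mem_L1⟩ ∈ LinearMap.range (brMap F X Y v) :=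
      LinearMap.mem_range_self _ _
    rw [hbot] at this; simpa using this
  have hy : ⁅v, Y⁆ = 0 := by
    have : brMap F X Y v ⟨Y, Y_mem_L1⟩ ∈ LinearMap.range (brMap F X Y v) :=
      LinearMap.mem_range_self _ _
    rw [hbot] at this; simpa using this
  rcases nonvanish hM hX hY hXY hk hv hv0 with h' | h' <;> [exact h' hx; exact h' hy]

lemma Lc_ne_bot (hM : IsMaximalClass E M Mc) (hX : X ∈ Mc 1) (hY : Y ∈ Mc 1)
    (hXY : LinearIndependent E ![X, Y]) :
    ∀ k, 1 ≤ k → ∃ w, w ∈ Lcomp F X Y k ∧ w ∈ Mc k ∧ w ≠ 0 := by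
  intro k hk
  induction k, hk using Nat.le_induction with
  | base => exact ⟨X, X_mem_L1, hX, X_ne_zero hXY⟩
  | succ k hk ih =>
    obtain ⟨w, hwL, hwM, hw0⟩ := ih
    rcases Nat.lt_or_ge k 2 with h2 | h2
    · interval_cases k
      refine ⟨⁅X, Y⁆, ?_, hM.lie_mem 1 1 X hX Y hY, lieXY_ne_zero hM hX hY hXY⟩
      rw [Lcomp_succ 1 le_rfl]
      exact Submodule.subset_span ⟨X, X_mem_L1, Y, Y_mem_L1, rfl⟩
    · have hmem : ∀ a, a ∈ Submodule.span F ({X, Y} : Set M) →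
          ⁅w, a⁆ ∈ Lcomp F X Y (k + 1) := by
        intro a ha
        rw [Lcomp_succ k (by omega)]
        exact Submodule.subset_span ⟨w, hwL, a, ha, rfl⟩
      rcases nonvanish hM hX hY hXY h2 hwM hw0 with h | h
      · exact ⟨⁅w, X⁆, hmem X X_mem_L1, hM.lie_mem _ _ w hwM X hX, h⟩
      · exact ⟨⁅w, Y⁆, hmem Y Y_mem_L1, hM.lie_mem _ _ w hwM Y hY, h⟩

lemma finrank_one_span {p : Submodule F M} [FiniteDimensional F ↥p]
    (h : Module.finrank F ↥p = 1) : ∃ v, v ≠ 0 ∧ p = Submodule.span F {v} := by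
  have hb : p ≠ ⊥ := by
    intro hb; rw [hb, finrank_bot] at h; omega
  obtain ⟨v, hv, hv0⟩ := Submodule.exists_mem_ne_zero_of_ne_bot hb
  refine ⟨v, hv0, ?_⟩
  refine (Submodule.eq_of_le_of_finrank_le ((Submodule.span_le).2 (by simpa using hv)) ?_).symm
  rw [h, finrank_span_singleton hv0]

lemma bracket_span_le_Lc_succ {k : ℕ} (hk : 1 ≤ k) {p : Submodule F M}
    (hp : p ≤ Lcomp F X Y k) :
    Submodule.span F {z : M | ∃ x ∈ p, ∃ a ∈ Submodule.span F ({X, Y} : Set M), z = ⁅x, a⁆}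
      ≤ Lcomp F X Y (k + 1) := by
  rw [Lcomp_succ k hk]
  apply Submodule.span_mono
  rintro z ⟨x, hx, a, ha, rfl⟩
  exact ⟨x, hp hx, a, ha, rfl⟩

lemma Lc_succ_of_span_singleton {k : ℕ} (hk : 1 ≤ k) {v : M}
    (h : Lcomp F X Y k = Submodule.span F {v}) :
    Lcomp F X Y (k + 1) = LinearMap.range (brMap F X Y v) := by
  rw [Lcomp_succ k hk, h, span_bracket_singleton]

lemma Lc2_eq (hM : IsMaximalClass E M Mc) (hX : X ∈ Mc 1) (hY : Y ∈ Mc 1)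
    (hXY : LinearIndependent E ![X, Y]) :
    Lcomp F X Y 2 = Submodule.span F ({⁅X, Y⁆} : Set M) := by
  apply le_antisymm
  · rw [Lcomp_succ 1 le_rfl]
    apply Submodule.span_le.2
    rintro z ⟨v, hv, a, ha, rfl⟩
    rcases Submodule.mem_span_pair.1 hv with ⟨c₁, c₂, rfl⟩
    rcases Submodule.mem_span_pair.1 ha with ⟨c₃, c₄, rfl⟩
    have expand : ⁅c₁ • X + c₂ • Y, c₃ • X + c₄ • Y⁆
        = (c₁ * c₄ - c₂ * c₃) • ⁅X, Y⁆ := by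
      simp only [lie_add, add_lie, lie_smul, smul_lie, smul_smul, lie_self, smul_zero,
        ← lie_skew X Y]
      module
    rw [SetLike.mem_coe, expand]
    exact Submodule.smul_mem _ _ (Submodule.mem_span_singleton_self _)
  · rw [Lcomp_succ 1 le_rfl]
    apply Submodule.span_le.2
    rintro z hz
    simp only [Set.mem_singleton_iff] at hz
    subst hz
    exact Submodule.subset_span ⟨X, X_mem_L1, Y, Y_mem_L1, rfl⟩

/-- If `d_k = 0` and some nonzero `w` lies in `L_k`, then `L_{k+1}` is all of `M_{k+1}`. -/
lemma fullstep (hM : IsMaximalClass E M Mc) (hX : X ∈ Mc 1) (hY : Y ∈ Mc 1)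
    (hXY : LinearIndependent E ![X, Y]) (hEF : Module.finrank F E = 2)
    {k : ℕ} (hk : 2 ≤ k) (hd : dSeq E Mc F X Y k = 0) :
    Lcomp F X Y (k + 1) = (Mc (k + 1)).restrictScalars F := by
  obtain ⟨w, hwL, hwM, hw0⟩ := Lc_ne_bot (F := F) hM hX hY hXY k (by omega)
  have hsp : Submodule.span F ({w} : Set M) ≤ Lcomp F X Y k := by
    apply Submodule.span_le.2; simpa using hwL
  have hr : LinearMap.range (brMap F X Y w) ≤ Lcomp F X Y (k + 1) := by
    rw [← span_bracket_singleton]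
    exact bracket_span_le_Lc_succ (by omega) hsp
  haveI := fd_McF hM hEF (F := F) (k + 1)
  have heq : LinearMap.range (brMap F X Y w) = (Mc (k + 1)).restrictScalars F := by
    apply Submodule.eq_of_le_of_finrank_le (range_brMap_le_Mc hM hX hY hwM)
    rw [finrank_McF hM hEF (by omega : 2 ≤ k + 1),
      finrank_range_brMap hM hX hY hXY hk hwM hw0, hd]
  exact le_antisymm (Lc_le_Mc hX hY hM (k + 1)) (heq ▸ hr)

/-- Fullness propagates. -/
lemma fullprop (hM : IsMaximalClass E M Mc) (hX : X ∈ Mc 1) (hY : Y ∈ Mc 1)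
    (hXY : LinearIndependent E ![X, Y])
    {k : ℕ} (hk : 2 ≤ k) (h : Lcomp F X Y k = (Mc k).restrictScalars F) :
    Lcomp F X Y (k + 1) = (Mc (k + 1)).restrictScalars F := by
  obtain ⟨w, hwM, hw0⟩ := Mc_exists_ne_zero hM hk
  apply le_antisymm (Lc_le_Mc hX hY hM (k + 1))
  have key : ∀ a, a ∈ Submodule.span F ({X, Y} : Set M) → a ∈ Mc 1 → ⁅w, a⁆ ≠ 0 →
      (Mc (k + 1)).restrictScalars F ≤ Lcomp F X Y (k + 1) := by
    intro a haL haM hne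
    intro x hx
    have hzM : ⁅w, a⁆ ∈ Mc (k + 1) := hM.lie_mem _ _ w hwM a haM
    have hx' : x ∈ Submodule.span E ({⁅w, a⁆} : Set M) := by
      rw [← Mc_eq_spanE hM (by omega) hzM hne]; exact hx
    rcases Submodule.mem_span_singleton.1 hx' with ⟨c, rfl⟩
    rw [Lcomp_succ k (by omega)]
    refine Submodule.subset_span ⟨c • w, ?_, a, haL, ?_⟩
    · rw [h]; exact Submodule.smul_mem _ c hwM
    · rw [smul_lie]
  rcases nonvanish hM hX hY hXY hk hwM hw0 with hne | hne
  · exact key X X_mem_L1 hX hne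
  · exact key Y Y_mem_L1 hY hne

lemma full_ge (hM : IsMaximalClass E M Mc) (hX : X ∈ Mc 1) (hY : Y ∈ Mc 1)
    (hXY : LinearIndependent E ![X, Y]) (hEF : Module.finrank F E = 2)
    {m : ℕ} (hm : 2 ≤ m) (hd : dSeq E Mc F X Y m = 0) :
    ∀ k, m + 1 ≤ k → Lcomp F X Y k = (Mc k).restrictScalars F := by
  intro k hk
  induction k, hk using Nat.le_induction with
  | base => exact fullstep hM hX hY hXY hEF hm hd
  | succ k hk ih => exact fullprop hM hX hY hXY (by omega) ih

/-- In the region before the first zero of `d`, the components `L_k` are one-dimensional. -/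
lemma regime_onedim (hM : IsMaximalClass E M Mc) (hX : X ∈ Mc 1) (hY : Y ∈ Mc 1)
    (hXY : LinearIndependent E ![X, Y]) (hEF : Module.finrank F E = 2)
    {n : ℕ} (hno : ∀ t, 2 ≤ t → t < n → dSeq E Mc F X Y t ≠ 0) :
    ∀ k, 2 ≤ k → k ≤ n → ∃ v, v ≠ 0 ∧ v ∈ Mc k ∧ Lcomp F X Y k = Submodule.span F {v} := by
  intro k hk
  induction k, hk using Nat.le_induction with
  | base =>
    exact fun _ => ⟨⁅X, Y⁆, lieXY_ne_zero hM hX hY hXY, hM.lie_mem 1 1 X hX Y hY,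
      Lc2_eq hM hX hY hXY⟩
  | succ k hk ih =>
    intro hkn
    obtain ⟨v, hv0, hvM, hvL⟩ := ih (by omega)
    have hd : dSeq E Mc F X Y k = 1 := by
      have h1 := d_le_one hM hX hY hXY hEF hk
      have h2 := hno k hk (by omega)
      omega
    have hrange := Lc_succ_of_span_singleton (F := F) (by omega : 1 ≤ k) hvL
    haveI := fd_McF hM hEF (F := F) (k + 1)
    haveI : FiniteDimensional F ↥(LinearMap.range (brMap F X Y v)) :=
      Submodule.finiteDimensional_of_le (range_brMap_le_Mc hM hX hY hvM)
    have hfr : Module.finrank F ↥(LinearMap.range (brMap F X Y v)) = 1 := by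
      rw [finrank_range_brMap hM hX hY hXY hk hvM hv0, hd]
    obtain ⟨v', hv'0, hv'⟩ := finrank_one_span hfr
    refine ⟨v', hv'0, ?_, by rw [hrange, hv']⟩
    have : v' ∈ LinearMap.range (brMap F X Y v) := by
      rw [hv']; exact Submodule.mem_span_singleton_self _
    exact range_brMap_le_Mc (F := F) hM hX hY hvM this


lemma X_mem_Lc1 : X ∈ Lcomp F X Y 1 := X_mem_L1
lemma Y_mem_Lc1 : Y ∈ Lcomp F X Y 1 := Y_mem_L1

lemma Lc_le_iSup (k : ℕ) : Lcomp F X Y k ≤ ⨆ i, Lcomp F X Y i := le_iSup _ k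

lemma Lc_le_Lpow {k j : ℕ} (h : j ≤ k) : Lcomp F X Y k ≤ Lpow F X Y j :=
  le_iSup₂ (f := fun i _ => Lcomp F X Y i) k h

lemma Lpow_antitone {a b : ℕ} (h : a ≤ b) : Lpow F X Y b ≤ Lpow F X Y a :=
  iSup₂_le fun k hk => Lc_le_Lpow (h.trans hk)

/-- From the ideal property: brackets of elements of `L₁` with elements of `I` stay in `I`. -/
lemma ideal_lie_mem {I : Submodule F M}
    (h : ∀ x ∈ (⨆ i : ℕ, Lcomp F X Y i : Submodule F M), ∀ y ∈ I, ⁅x, y⁆ ∈ I)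
    {a y : M} (ha : a ∈ Lcomp F X Y 1) (hy : y ∈ I) : ⁅y, a⁆ ∈ I := by
  have h1 : ⁅a, y⁆ ∈ I := h a (Lc_le_iSup 1 ha) y hy
  have : ⁅y, a⁆ = -⁅a, y⁆ := by rw [← lie_skew]
  rw [this]
  exact neg_mem h1

lemma Lc_le_ideal_succ {I : Submodule F M}
    (h : ∀ x ∈ (⨆ i : ℕ, Lcomp F X Y i : Submodule F M), ∀ y ∈ I, ⁅x, y⁆ ∈ I)
    {k : ℕ} (hk : 1 ≤ k) (hle : Lcomp F X Y k ≤ I) : Lcomp F X Y (k + 1) ≤ I := by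
  rw [Lcomp_succ k hk]
  apply Submodule.span_le.2
  rintro z ⟨v, hv, a, ha, rfl⟩
  exact ideal_lie_mem h ha (hle hv)

lemma Lc_le_ideal_ge {I : Submodule F M}
    (h : ∀ x ∈ (⨆ i : ℕ, Lcomp F X Y i : Submodule F M), ∀ y ∈ I, ⁅x, y⁆ ∈ I)
    {k : ℕ} (hk : 1 ≤ k) (hle : Lcomp F X Y k ≤ I) :
    ∀ l, k ≤ l → Lcomp F X Y l ≤ I := by
  intro l hl
  induction l, hl using Nat.le_induction with
  | base => exact hle
  | succ l hl ih => exact Lc_le_ideal_succ h (by omega) ih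

lemma span_le_of_mem {I : Submodule F M} {v w : M}
    (hw : w ∈ Submodule.span F ({v} : Set M)) (hw0 : w ≠ 0) (hwI : w ∈ I) :
    Submodule.span F ({v} : Set M) ≤ I := by
  rcases Submodule.mem_span_singleton.1 hw with ⟨c, rfl⟩
  have hc : c ≠ 0 := by rintro rfl; simp at hw0
  apply Submodule.span_le.2
  intro z hz
  rw [Set.mem_singleton_iff] at hz
  have hv : v = c⁻¹ • c • v := by rw [smul_smul, inv_mul_cancel₀ hc, one_smul]
  rw [hz, hv]
  exact Submodule.smul_mem _ _ hwI

/-- A chain of nonzero elements of `I ∩ M_k` can be propagated upwards. -/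
lemma chain_up (hM : IsMaximalClass E M Mc) (hX : X ∈ Mc 1) (hY : Y ∈ Mc 1)
    (hXY : LinearIndependent E ![X, Y]) {I : Submodule F M}
    (h : ∀ x ∈ (⨆ i : ℕ, Lcomp F X Y i : Submodule F M), ∀ y ∈ I, ⁅x, y⁆ ∈ I)
    {i : ℕ} (hi : 2 ≤ i) (hbase : ∃ w, w ∈ I ∧ w ∈ Mc i ∧ w ≠ 0) :
    ∀ k, i ≤ k → ∃ w, w ∈ I ∧ w ∈ Mc k ∧ w ≠ 0 := by
  intro k hk
  induction k, hk using Nat.le_induction with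
  | base => exact hbase
  | succ k hk ih =>
    obtain ⟨w, hwI, hwM, hw0⟩ := ih
    rcases nonvanish hM hX hY hXY (by omega) hwM hw0 with hne | hne
    · exact ⟨⁅w, X⁆, ideal_lie_mem h X_mem_Lc1 hwI, hM.lie_mem _ _ w hwM X hX, hne⟩
    · exact ⟨⁅w, Y⁆, ideal_lie_mem h Y_mem_Lc1 hwI, hM.lie_mem _ _ w hwM Y hY, hne⟩

/-- If `d_k = 0` and `I` contains a nonzero element of `M_k`, then `I ⊇ M_{k+1}`. -/
lemma fullrange_le_ideal (hM : IsMaximalClass E M Mc) (hX : X ∈ Mc 1) (hY : Y ∈ Mc 1)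
    (hXY : LinearIndependent E ![X, Y]) (hEF : Module.finrank F E = 2) {I : Submodule F M}
    (h : ∀ x ∈ (⨆ i : ℕ, Lcomp F X Y i : Submodule F M), ∀ y ∈ I, ⁅x, y⁆ ∈ I)
    {k : ℕ} (hk : 2 ≤ k) (hd : dSeq E Mc F X Y k = 0)
    {w : M} (hwI : w ∈ I) (hwM : w ∈ Mc k) (hw0 : w ≠ 0) :
    (Mc (k + 1)).restrictScalars F ≤ I := by
  haveI := fd_McF hM hEF (F := F) (k + 1)
  have heq : LinearMap.range (brMap F X Y w) = (Mc (k + 1)).restrictScalars F := by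
    apply Submodule.eq_of_le_of_finrank_le (range_brMap_le_Mc hM hX hY hwM)
    rw [finrank_McF hM hEF (by omega : 2 ≤ k + 1),
      finrank_range_brMap hM hX hY hXY hk hwM hw0, hd]
  rw [← heq]
  rintro z ⟨a, rfl⟩
  exact ideal_lie_mem h a.2 hwI

lemma McF_le_ideal_ge (hM : IsMaximalClass E M Mc) (hX : X ∈ Mc 1) (hY : Y ∈ Mc 1)
    (hXY : LinearIndependent E ![X, Y]) {I : Submodule F M}
    (h : ∀ x ∈ (⨆ i : ℕ, Lcomp F X Y i : Submodule F M), ∀ y ∈ I, ⁅x, y⁆ ∈ I)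
    {l : ℕ} (hl : 2 ≤ l) (hle : (Mc l).restrictScalars F ≤ I) :
    ∀ k, l ≤ k → (Mc k).restrictScalars F ≤ I := by
  intro k hk
  induction k, hk using Nat.le_induction with
  | base => exact hle
  | succ k hk ih =>
    obtain ⟨w, hwM, hw0⟩ := Mc_exists_ne_zero hM (by omega : 2 ≤ k)
    have key : ∀ a, a ∈ Lcomp F X Y 1 → a ∈ Mc 1 → ⁅w, a⁆ ≠ 0 →
        (Mc (k + 1)).restrictScalars F ≤ I := by
      intro a haL haM hne
      intro x hx
      have hzM : ⁅w, a⁆ ∈ Mc (k + 1) := hM.lie_mem _ _ w hwM a haM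
      have hx' : x ∈ Submodule.span E ({⁅w, a⁆} : Set M) := by
        rw [← Mc_eq_spanE hM (by omega) hzM hne]; exact hx
      rcases Submodule.mem_span_singleton.1 hx' with ⟨c, rfl⟩
      have : c • ⁅w, a⁆ = ⁅c • w, a⁆ := (smul_lie c w a).symm
      rw [this]
      exact ideal_lie_mem h haL (ih (Submodule.smul_mem (Mc k) c hwM))
    rcases nonvanish hM hX hY hXY (by omega) hwM hw0 with hne | hne
    · exact key X X_mem_Lc1 hX hne
    · exact key Y Y_mem_Lc1 hY hne

/-- Independence of homogeneous components, over `F`. -/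
lemma indep_Mc (hM : IsMaximalClass E M Mc) {n : ℕ} {x : M} (hx : x ∈ Mc n)
    (hx' : x ∈ (⨆ k, ⨆ _ : k ≠ n, (Mc k).restrictScalars F : Submodule F M)) : x = 0 := by
  have hle : (⨆ k, ⨆ _ : k ≠ n, (Mc k).restrictScalars F : Submodule F M)
      ≤ ((⨆ k, ⨆ _ : k ≠ n, Mc k : Submodule E M)).restrictScalars F := by
    refine iSup_le fun k => iSup_le fun hk => ?_
    intro z hz
    have h2 : Mc k ≤ ⨆ k, ⨆ _ : k ≠ n, Mc k :=
      le_iSup₂ (f := fun k (_ : k ≠ n) => Mc k) k hk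
    exact h2 hz
  have hdis := hM.internal.submodule_iSupIndep n
  have hx2 : x ∈ ((⨆ k, ⨆ _ : k ≠ n, Mc k : Submodule E M)).restrictScalars F := hle hx'
  have hx3 : x ∈ (⨆ k, ⨆ _ : k ≠ n, Mc k : Submodule E M) := hx2
  have : x ∈ (⊥ : Submodule E M) := hdis.le_bot (Submodule.mem_inf.2 ⟨hx, hx3⟩)
  simpa using this

lemma mem_Lpow_eq_zero (hM : IsMaximalClass E M Mc) (hX : X ∈ Mc 1) (hY : Y ∈ Mc 1)
    {n : ℕ} {x : M} (hx : x ∈ Mc n) (h : x ∈ Lpow F X Y (n + 1)) : x = 0 := by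
  apply indep_Mc (F := F) hM hx
  have hle : Lpow F X Y (n + 1) ≤ (⨆ k, ⨆ _ : k ≠ n, (Mc k).restrictScalars F) := by
    refine iSup₂_le fun k hk => ?_
    exact (Lc_le_Mc hX hY hM k).trans
      (le_iSup₂ (f := fun k _ => (Mc k).restrictScalars F) k (by omega))
  exact hle h

/-- Projection onto a homogeneous component. -/
lemma proj_component (hM : IsMaximalClass E M Mc) {J : ℕ → Submodule F M}
    (hJ : ∀ k, J k ≤ (Mc k).restrictScalars F) {n : ℕ} {x : M}
    (hx : x ∈ (⨆ k, J k : Submodule F M)) (hxn : x ∈ Mc n) : x ∈ J n := by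
  classical
  rw [Submodule.mem_iSup_iff_exists_finsupp] at hx
  obtain ⟨f, hf, hsum⟩ := hx
  have hmem : ∀ k, k ≠ n →
      f k ∈ (⨆ k, ⨆ _ : k ≠ n, (Mc k).restrictScalars F : Submodule F M) := fun k hk =>
    (le_iSup₂ (f := fun k (_ : k ≠ n) => (Mc k).restrictScalars F) k hk) (hJ k (hf k))
  have hrest : x - f n ∈ (⨆ k, ⨆ _ : k ≠ n, (Mc k).restrictScalars F : Submodule F M) := by
    rw [← hsum]
    by_cases hn : n ∈ f.support
    · rw [Finsupp.sum, ← Finset.add_sum_erase _ _ hn, add_sub_cancel_left]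
      exact Submodule.sum_mem _ fun k hk => hmem k (Finset.ne_of_mem_erase hk)
    · rw [Finsupp.notMem_support_iff.1 hn, sub_zero, Finsupp.sum]
      exact Submodule.sum_mem _ fun k hk => hmem k (by rintro rfl; exact hn hk)
  have hsub : x - f n ∈ Mc n := by
    have hfn : f n ∈ Mc n := hJ n (hf n)
    exact Submodule.sub_mem _ hxn hfn
  have h0 : x - f n = 0 := indep_Mc hM hsub hrest
  have : x = f n := by rwa [sub_eq_zero] at h0
  rw [this]
  exact hf n

section Nth

variable {D₀ : ℕ → Prop}

lemma r_pos (hinf : (setOf D₀).Infinite) {r : ℕ}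
    (hrmax : ∃ j : ℕ, Nat.nth D₀ (j + 1) - Nat.nth D₀ j = r) : 1 ≤ r := by
  obtain ⟨j, hj⟩ := hrmax
  have := (Nat.nth_lt_nth hinf).2 (by omega : j < j + 1)
  omega

lemma nth_gap (hinf : (setOf D₀).Infinite) {j k : ℕ}
    (h1 : Nat.nth D₀ j < k) (h2 : k < Nat.nth D₀ (j + 1)) : ¬ D₀ k := by
  classical
  intro hk
  have hc := Nat.nth_count (p := D₀) hk
  rcases le_or_gt (Nat.count D₀ k) j with h | h
  · have := (Nat.nth_le_nth hinf).2 h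
    omega
  · have : j + 1 ≤ Nat.count D₀ k := h
    have := (Nat.nth_le_nth hinf).2 this
    omega

lemma window (hinf : (setOf D₀).Infinite) {r : ℕ}
    (hrub : ∀ j : ℕ, Nat.nth D₀ (j + 1) - Nat.nth D₀ j ≤ r) {i : ℕ} (hi : 2 ≤ i) :
    (∃ n, D₀ n ∧ i ≤ n ∧ n ≤ i + r - 1) ∨
    ((∀ k, k < Nat.nth D₀ 0 → ¬ D₀ k) ∧ i ≤ Nat.nth D₀ 0) := by
  classical
  have hfirst : ∀ k, k < Nat.nth D₀ 0 → ¬ D₀ k := by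
    intro k hk hDk
    have : Nat.nth D₀ 0 ≤ k := by
      rw [Nat.nth_zero]
      exact csInf_le (OrderBot.bddBelow _) hDk
    omega
  by_cases hc : ∃ e, D₀ e ∧ e < i
  · left
    obtain ⟨e, he, hei⟩ := hc
    have hQ : ∃ t, i ≤ Nat.nth D₀ t := ⟨i, (Nat.nth_strictMono hinf).le_apply⟩
    set t₀ := Nat.find hQ with ht₀def
    have ht₀ : i ≤ Nat.nth D₀ t₀ := Nat.find_spec hQ
    have hne : Nat.nth D₀ (Nat.count D₀ e) = e := Nat.nth_count he
    have ht₀pos : 1 ≤ t₀ := by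
      rcases Nat.eq_zero_or_pos t₀ with h0 | h0
      · exfalso
        have h1 : Nat.nth D₀ 0 ≤ Nat.nth D₀ (Nat.count D₀ e) :=
          (Nat.nth_le_nth hinf).2 (Nat.zero_le _)
        rw [hne] at h1
        rw [h0] at ht₀
        omega
      · exact h0
    have hprev : ¬ i ≤ Nat.nth D₀ (t₀ - 1) := Nat.find_min hQ (by omega)
    have hgap := hrub (t₀ - 1)
    have hsucc : t₀ - 1 + 1 = t₀ := by omega
    rw [hsucc] at hgap
    exact ⟨Nat.nth D₀ t₀, Nat.nth_mem_of_infinite hinf t₀, ht₀, by omega⟩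
  · right
    push_neg at hc
    refine ⟨hfirst, ?_⟩
    have hD0 : D₀ (Nat.nth D₀ 0) := Nat.nth_mem_of_infinite hinf 0
    have := hc _ hD0
    omega

end Nth

end Aux





/-- The chain of subspaces generated by a single element `w₀` under bracketing with `L₁`. -/
def chainC (F : Type*) [Field F] {M : Type*} [LieRing M] [Module F M]
    (X Y w₀ : M) : ℕ → Submodule F M
  | 0 => Submodule.span F {w₀}
  | (t + 1) => Submodule.span F
      {z : M | ∃ x ∈ chainC F X Y w₀ t, ∃ a ∈ Submodule.span F ({X, Y} : Set M), z = ⁅x, a⁆}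

section Aux2

open Module

variable {E : Type*} [Field E] {M : Type*} [LieRing M] [LieAlgebra E M]
  {Mc : ℕ → Submodule E M}
  {F : Type*} [Field F] [Algebra F E] [LieAlgebra F M] [IsScalarTower F E M]
  {X Y : M}

lemma chainC_succ (w₀ : M) (t : ℕ) :
    chainC F X Y w₀ (t + 1) = Submodule.span F
      {z : M | ∃ x ∈ chainC F X Y w₀ t, ∃ a ∈ Submodule.span F ({X, Y} : Set M), z = ⁅x, a⁆} :=
  rfl

lemma chainC_le_Lc {s : ℕ} (hs : 1 ≤ s) {w₀ : M} (hw : w₀ ∈ Lcomp F X Y s) :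
    ∀ t, chainC F X Y w₀ t ≤ Lcomp F X Y (s + t) := by
  intro t
  induction t with
  | zero =>
    apply Submodule.span_le.2
    intro z hz
    rw [Set.mem_singleton_iff] at hz
    rw [hz]
    exact hw
  | succ t ih =>
    rw [chainC_succ]
    have := bracket_span_le_Lc_succ (F := F) (X := X) (Y := Y) (by omega : 1 ≤ s + t) ih
    have harith : s + t + 1 = s + (t + 1) := by omega
    rw [harith] at this
    refine le_trans ?_ this
    apply Submodule.span_mono
    rintro z ⟨x, hx, a, ha, rfl⟩
    exact ⟨x, hx, a, ha, rfl⟩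

lemma chainC_spans (hM : IsMaximalClass E M Mc) (hX : X ∈ Mc 1) (hY : Y ∈ Mc 1)
    (hXY : LinearIndependent E ![X, Y]) (hEF : Module.finrank F E = 2)
    {s : ℕ} (hs : 2 ≤ s) {w₀ : M} (hw0 : w₀ ≠ 0) (hwM : w₀ ∈ Mc s) :
    ∀ t, (∀ t', t' < t → dSeq E Mc F X Y (s + t') = 1) →
      ∃ v, v ≠ 0 ∧ v ∈ Mc (s + t) ∧ chainC F X Y w₀ t = Submodule.span F {v} := by
  intro t
  induction t with
  | zero => exact fun _ => ⟨w₀, hw0, hwM, rfl⟩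
  | succ t ih =>
    intro hd
    obtain ⟨v, hv0, hvM, hveq⟩ := ih fun t' ht' => hd t' (by omega)
    have hrw : chainC F X Y w₀ (t + 1) = LinearMap.range (brMap F X Y v) := by
      rw [chainC_succ, hveq, span_bracket_singleton]
    haveI := fd_McF hM hEF (F := F) (s + t + 1)
    haveI : FiniteDimensional F ↥(LinearMap.range (brMap F X Y v)) :=
      Submodule.finiteDimensional_of_le (range_brMap_le_Mc hM hX hY hvM)
    have hfr : Module.finrank F ↥(LinearMap.range (brMap F X Y v)) = 1 := by
      rw [finrank_range_brMap hM hX hY hXY (by omega) hvM hv0, hd t (by omega)]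
    obtain ⟨v', hv'0, hv'⟩ := finrank_one_span hfr
    refine ⟨v', hv'0, ?_, by rw [hrw, hv']⟩
    have hmem : v' ∈ LinearMap.range (brMap F X Y v) := by
      rw [hv']; exact Submodule.mem_span_singleton_self _
    have harith : s + t + 1 = s + (t + 1) := by omega
    rw [← harith]
    exact range_brMap_le_Mc (F := F) hM hX hY hvM hmem

/-- Part 1: `L` is ideally `r`-constrained. -/
lemma part1 (hM : IsMaximalClass E M Mc) (hEF : Module.finrank F E = 2)
    (hX : X ∈ Mc 1) (hY : Y ∈ Mc 1) (hXY : LinearIndependent E ![X, Y])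
    {D₀ : ℕ → Prop} (hD₀ : ∀ i, D₀ i ↔ 2 ≤ i ∧ dSeq E Mc F X Y i = 0)
    (hinf : (setOf D₀).Infinite) {r : ℕ} (hr1 : 1 ≤ r)
    (hrub : ∀ j : ℕ, Nat.nth D₀ (j + 1) - Nat.nth D₀ j ≤ r) :
    IdeallyConstrained F X Y r := by
  intro I hI hIne
  classical
  have hex : ∃ k, 1 ≤ k ∧ I ⊓ Lcomp F X Y k ≠ ⊥ := by
    by_contra h
    push_neg at h
    apply hIne
    apply le_bot_iff.1
    conv_lhs => rw [hI.2]
    exact iSup_le fun k => iSup_le fun hk => le_of_eq (h k hk)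
  set i := Nat.find hex with hidef
  obtain ⟨hi1, hIne_i⟩ := Nat.find_spec hex
  have hmin : ∀ k, k < i → 1 ≤ k → I ⊓ Lcomp F X Y k = ⊥ := fun k hk h1 => by
    by_contra h
    exact Nat.find_min hex hk ⟨h1, h⟩
  have hIle : I ≤ Lpow F X Y i := by
    conv_lhs => rw [hI.2]
    refine iSup_le fun k => iSup_le fun hk => ?_
    rcases Nat.lt_or_ge k i with h | h
    · rw [hmin k h hk]; exact bot_le
    · exact le_trans inf_le_right (Lc_le_Lpow h)
  refine ⟨i, hi1, hIle, ?_⟩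
  obtain ⟨w, hw, hw0⟩ := Submodule.exists_mem_ne_zero_of_ne_bot hIne_i
  obtain ⟨hwI, hwL⟩ := Submodule.mem_inf.1 hw
  rcases eq_or_lt_of_le hi1 with h1 | h2
  · -- minimal degree 1
    have hwL1 : w ∈ Lcomp F X Y 1 := by rw [← h1] at hwL; exact hwL
    rcases Submodule.mem_span_pair.1 (hwL1 : w ∈ Submodule.span F ({X, Y} : Set M))
      with ⟨c₁, c₂, hw12⟩
    have hXYne := lieXY_ne_zero hM hX hY hXY
    have key : ∃ z, z ∈ I ∧ z ∈ Lcomp F X Y 2 ∧ z ≠ 0 := by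
      by_cases hc₁ : c₁ = 0
      · have hc₂ : c₂ ≠ 0 := by
          rintro rfl
          rw [hc₁] at hw12
          simp at hw12
          exact hw0 hw12.symm
        refine ⟨⁅w, X⁆, ideal_lie_mem hI.1 X_mem_Lc1 hwI, ?_, ?_⟩
        · rw [Lcomp_succ 1 le_rfl]
          exact Submodule.subset_span ⟨w, hwL1, X, X_mem_L1, rfl⟩
        · rw [← hw12, hc₁]
          intro hzero
          apply hc₂
          have : ⁅(0 : F) • X + c₂ • Y, X⁆ = -c₂ • ⁅X, Y⁆ := by
            simp only [zero_smul, zero_add, add_lie, smul_lie, ← lie_skew X Y]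
            module
          rw [this] at hzero
          have := smul_eq_zero.1 hzero
          rcases this with h | h
          · simpa using h
          · exact absurd h hXYne
      · refine ⟨⁅w, Y⁆, ideal_lie_mem hI.1 Y_mem_Lc1 hwI, ?_, ?_⟩
        · rw [Lcomp_succ 1 le_rfl]
          exact Submodule.subset_span ⟨w, hwL1, Y, Y_mem_L1, rfl⟩
        · rw [← hw12]
          intro hzero
          apply hc₁
          have : ⁅c₁ • X + c₂ • Y, Y⁆ = c₁ • ⁅X, Y⁆ := by
            simp only [add_lie, smul_lie, lie_self, smul_zero, add_zero]
          rw [this] at hzero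
          rcases smul_eq_zero.1 hzero with h | h
          · exact h
          · exact absurd h hXYne
    obtain ⟨z, hzI, hzL, hz0⟩ := key
    have hL2 : Lcomp F X Y 2 ≤ I := by
      rw [Lc2_eq hM hX hY hXY]
      apply span_le_of_mem _ hz0 hzI
      rw [← Lc2_eq hM hX hY hXY]
      exact hzL
    have hall : ∀ l, 2 ≤ l → Lcomp F X Y l ≤ I := Lc_le_ideal_ge hI.1 (by omega) hL2
    refine iSup₂_le fun k hk => hall k (by omega)
  · -- minimal degree i ≥ 2
    have hi2 : 2 ≤ i := h2
    rcases window hinf hrub hi2 with ⟨n, hn, hin, hnle⟩ | ⟨hreg, hin0⟩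
    · -- a zero of d in the window [i, i+r-1]
      obtain ⟨hn2, hdn⟩ := (hD₀ n).1 hn
      have hwM : w ∈ Mc i := Lc_le_Mc (F := F) hX hY hM i hwL
      obtain ⟨wn, hwnI, hwnM, hwn0⟩ :=
        chain_up hM hX hY hXY hI.1 hi2 ⟨w, hwI, hwM, hw0⟩ n hin
      have hMn1 : (Mc (n + 1)).restrictScalars F ≤ I :=
        fullrange_le_ideal hM hX hY hXY hEF hI.1 hn2 hdn hwnI hwnM hwn0
      have hall : ∀ k, n + 1 ≤ k → (Mc k).restrictScalars F ≤ I :=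
        McF_le_ideal_ge hM hX hY hXY hI.1 (by omega) hMn1
      refine iSup₂_le fun k hk => ?_
      exact (Lc_le_Mc hX hY hM k).trans (hall k (by omega))
    · -- no zero of d below the first element of D₀, and i ≤ nth D₀ 0
      set n₀ := Nat.nth D₀ 0 with hn₀def
      have hD0 : D₀ n₀ := Nat.nth_mem_of_infinite hinf 0
      obtain ⟨hn₀2, _⟩ := (hD₀ n₀).1 hD0
      have hno : ∀ t, 2 ≤ t → t < n₀ → dSeq E Mc F X Y t ≠ 0 := by
        intro t h2t hlt hdt
        exact hreg t hlt ((hD₀ t).2 ⟨h2t, hdt⟩)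
      obtain ⟨v, hv0, hvM, hvL⟩ :=
        regime_onedim hM hX hY hXY hEF hno i hi2 hin0
      have hLi : Lcomp F X Y i ≤ I := by
        rw [hvL]
        apply span_le_of_mem _ hw0 hwI
        rw [← hvL]
        exact hwL
      have hall : ∀ l, i ≤ l → Lcomp F X Y l ≤ I := Lc_le_ideal_ge hI.1 (by omega) hLi
      refine iSup₂_le fun k hk => hall k (by omega)


/-- Part 2: `L` is not ideally `(r-1)`-constrained. -/
lemma part2 (hM : IsMaximalClass E M Mc) (hEF : Module.finrank F E = 2)
    (hX : X ∈ Mc 1) (hY : Y ∈ Mc 1) (hXY : LinearIndependent E ![X, Y])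
    {D₀ : ℕ → Prop} (hD₀ : ∀ i, D₀ i ↔ 2 ≤ i ∧ dSeq E Mc F X Y i = 0)
    (hinf : (setOf D₀).Infinite) {r : ℕ}
    (hrmax : ∃ j : ℕ, Nat.nth D₀ (j + 1) - Nat.nth D₀ j = r) :
    ¬ IdeallyConstrained F X Y (r - 1) := by
  intro hcon
  classical
  have hr1 : 1 ≤ r := r_pos hinf hrmax
  obtain ⟨j, hj⟩ := hrmax
  set m := Nat.nth D₀ j with hmdef
  set m' := Nat.nth D₀ (j + 1) with hm'def
  have hmm' : m < m' := (Nat.nth_lt_nth hinf).2 (by omega)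
  have hm' : m' = m + r := by omega
  have hDm : D₀ m := Nat.nth_mem_of_infinite hinf j
  have hDm' : D₀ m' := Nat.nth_mem_of_infinite hinf (j + 1)
  obtain ⟨hm2, hdm⟩ := (hD₀ m).1 hDm
  obtain ⟨hm'2, hdm'⟩ := (hD₀ m').1 hDm'
  have hbetween : ∀ k, m < k → k < m' → dSeq E Mc F X Y k = 1 := by
    intro k h1 h2
    have hnd : ¬ D₀ k := nth_gap hinf h1 h2
    have hd0 : dSeq E Mc F X Y k ≠ 0 := fun h0 => hnd ((hD₀ k).2 ⟨by omega, h0⟩)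
    have := d_le_one hM hX hY hXY hEF (by omega : 2 ≤ k)
    omega
  have hfull : ∀ k, m + 1 ≤ k → Lcomp F X Y k = (Mc k).restrictScalars F :=
    full_ge hM hX hY hXY hEF hm2 hdm
  obtain ⟨w₀, hw₀M, hw₀0⟩ := Mc_exists_ne_zero hM (by omega : 2 ≤ m + 1)
  have hw₀L : w₀ ∈ Lcomp F X Y (m + 1) := by
    rw [hfull (m + 1) le_rfl]; exact hw₀M
  set J : ℕ → Submodule F M := fun k =>
    if k ≤ m then ⊥ else if k ≤ m' then chainC F X Y w₀ (k - (m + 1))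
    else Lcomp F X Y k with hJdef
  set I : Submodule F M := ⨆ k, J k with hIdef
  have hJ_le_Lc : ∀ k, J k ≤ Lcomp F X Y k := by
    intro k
    by_cases h1 : k ≤ m
    · simp only [hJdef, if_pos h1]; exact bot_le
    · by_cases h2 : k ≤ m'
      · have hJk : J k = chainC F X Y w₀ (k - (m + 1)) := by
          simp only [hJdef, if_neg h1, if_pos h2]
        rw [hJk]
        have hc := chainC_le_Lc (F := F) (by omega : 1 ≤ m + 1) hw₀L (k - (m + 1))
        have harith : m + 1 + (k - (m + 1)) = k := by omega
        rwa [harith] at hc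
      · simp only [hJdef, if_neg h1, if_neg h2]; exact le_rfl
  have hJ_le_Mc : ∀ k, J k ≤ (Mc k).restrictScalars F := fun k =>
    (hJ_le_Lc k).trans (Lc_le_Mc (F := F) hX hY hM k)
  have hJs : ∀ k, Submodule.span F
      {z : M | ∃ x ∈ J k, ∃ a ∈ Submodule.span F ({X, Y} : Set M), z = ⁅x, a⁆} ≤ J (k + 1) := by
    intro k
    by_cases h1 : k ≤ m
    · have hJk : J k = ⊥ := by simp only [hJdef, if_pos h1]
      apply Submodule.span_le.2
      rintro z ⟨x, hx, a, ha, rfl⟩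
      rw [hJk] at hx
      simp only [Submodule.mem_bot] at hx
      rw [hx, zero_lie]
      exact Submodule.zero_mem _
    · by_cases h2 : k + 1 ≤ m'
      · have hJk : J k = chainC F X Y w₀ (k - (m + 1)) := by
          simp only [hJdef, if_neg h1, if_pos (by omega : k ≤ m')]
        have hJk1 : J (k + 1) = chainC F X Y w₀ (k + 1 - (m + 1)) := by
          simp only [hJdef, if_neg (by omega : ¬ k + 1 ≤ m), if_pos h2]
        have harith : k + 1 - (m + 1) = (k - (m + 1)) + 1 := by omega
        rw [hJk, hJk1, harith, chainC_succ]
      · have hJk1 : J (k + 1) = Lcomp F X Y (k + 1) := by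
          simp only [hJdef, if_neg (by omega : ¬ k + 1 ≤ m), if_neg h2]
        rw [hJk1]
        exact bracket_span_le_Lc_succ (by omega : 1 ≤ k) (hJ_le_Lc k)
  have hbr : ∀ p, ∀ x ∈ Lcomp F X Y p, ∀ k, ∀ y ∈ J k, ⁅x, y⁆ ∈ J (p + k) := by
    intro p
    induction p using Nat.strong_induction_on with
    | _ p ih =>
      match p with
      | 0 =>
        intro x hx k y hy
        have hx0 : x = 0 := by simpa [Lcomp] using hx
        rw [hx0, zero_lie]
        exact Submodule.zero_mem _
      | 1 =>
        intro x hx k y hy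
        have h1 : ⁅y, x⁆ ∈ J (k + 1) := hJs k (Submodule.subset_span ⟨y, hy, x, hx, rfl⟩)
        have h2 : ⁅x, y⁆ = -⁅y, x⁆ := by rw [← lie_skew]
        rw [h2, (by omega : 1 + k = k + 1)]
        exact neg_mem h1
      | (p + 2) =>
        intro x hx k y hy
        have hxs : x ∈ Submodule.span F {z : M | ∃ v ∈ Lcomp F X Y (p + 1),
            ∃ a ∈ Submodule.span F ({X, Y} : Set M), z = ⁅v, a⁆} := by
          rw [← Lcomp_succ (p + 1) (by omega)]; exact hx
        refine Submodule.span_induction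
          (p := fun z _ => ⁅z, y⁆ ∈ J (p + 2 + k)) ?_ ?_ ?_ ?_ hxs
        · rintro z ⟨v, hv, a, ha, rfl⟩
          show ⁅(⁅v, a⁆ : M), y⁆ ∈ J (p + 2 + k)
          have hay : ⁅a, y⁆ ∈ J (k + 1) := by
            have h1 : ⁅y, a⁆ ∈ J (k + 1) := hJs k (Submodule.subset_span ⟨y, hy, a, ha, rfl⟩)
            have h2 : ⁅a, y⁆ = -⁅y, a⁆ := by rw [← lie_skew]
            rw [h2]; exact neg_mem h1
          have h₂ : ⁅v, ⁅a, y⁆⁆ ∈ J (p + 1 + (k + 1)) :=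
            ih (p + 1) (by omega) v hv (k + 1) _ hay
          have h₃ : ⁅v, y⁆ ∈ J (p + 1 + k) := ih (p + 1) (by omega) v hv k y hy
          have h₄ : ⁅a, ⁅v, y⁆⁆ ∈ J (1 + (p + 1 + k)) := ih 1 (by omega) a ha _ _ h₃
          rw [lie_lie]
          rw [(by omega : p + 1 + (k + 1) = p + 2 + k)] at h₂
          rw [(by omega : 1 + (p + 1 + k) = p + 2 + k)] at h₄
          exact sub_mem h₂ h₄
        · show ⁅(0 : M), y⁆ ∈ J (p + 2 + k)
          rw [zero_lie]; exact Submodule.zero_mem _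
        · intro a b _ _ ha hb
          show ⁅a + b, y⁆ ∈ J (p + 2 + k)
          rw [add_lie]; exact add_mem ha hb
        · intro c z _ hz
          show ⁅c • z, y⁆ ∈ J (p + 2 + k)
          rw [smul_lie]; exact Submodule.smul_mem _ _ hz
  have hgr : IsGradedIdealL F X Y I := by
    constructor
    · intro x hx y hy
      refine Submodule.iSup_induction _ (motive := fun y => ⁅x, y⁆ ∈ I) hy ?_ ?_ ?_
      · intro k y hyk
        refine Submodule.iSup_induction _ (motive := fun x => ⁅x, y⁆ ∈ I) hx ?_ ?_ ?_
        · intro p x hxp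
          exact (le_iSup J (p + k)) (hbr p x hxp k y hyk)
        · show ⁅(0 : M), y⁆ ∈ I
          rw [zero_lie]; exact Submodule.zero_mem _
        · intro a b ha hb
          show ⁅a + b, y⁆ ∈ I
          rw [add_lie]; exact add_mem ha hb
      · show ⁅x, (0 : M)⁆ ∈ I
        rw [lie_zero]; exact Submodule.zero_mem _
      · intro a b ha hb
        show ⁅x, a + b⁆ ∈ I
        rw [lie_add]; exact add_mem ha hb
    · apply le_antisymm
      · refine iSup_le fun k => ?_
        rcases Nat.eq_zero_or_pos k with rfl | hk
        · have hJ0 : J 0 = ⊥ := by simp only [hJdef, if_pos (by omega : 0 ≤ m)]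
          rw [hJ0]; exact bot_le
        · refine le_trans (le_inf (le_iSup J k) (hJ_le_Lc k)) ?_
          exact le_iSup₂ (f := fun k (_ : 1 ≤ k) => I ⊓ Lcomp F X Y k) k hk
      · exact iSup₂_le fun k hk => inf_le_left
  have hw₀J : w₀ ∈ J (m + 1) := by
    have hJm1 : J (m + 1) = chainC F X Y w₀ 0 := by
      simp only [hJdef, if_neg (by omega : ¬ m + 1 ≤ m), if_pos (by omega : m + 1 ≤ m'),
        Nat.sub_self]
    rw [hJm1]
    exact Submodule.mem_span_singleton_self w₀
  have hw₀I : w₀ ∈ I := (le_iSup J (m + 1)) hw₀J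
  have hne : I ≠ ⊥ := by
    intro hb
    rw [hb] at hw₀I
    exact hw₀0 (by simpa using hw₀I)
  obtain ⟨i, hi1, hIle, hIge⟩ := hcon I hgr hne
  rcases le_or_gt i (m + 1) with hle | hlt
  · have h1 : Lcomp F X Y m' ≤ Lpow F X Y (i + (r - 1)) := Lc_le_Lpow (by omega)
    have h2 : Lcomp F X Y m' ≤ I := h1.trans hIge
    have hd1 : ∀ t', t' < r - 1 → dSeq E Mc F X Y (m + 1 + t') = 1 := fun t' ht' =>
      hbetween (m + 1 + t') (by omega) (by omega)
    obtain ⟨v, hv0, hvM, hveq⟩ :=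
      chainC_spans hM hX hY hXY hEF (by omega : 2 ≤ m + 1) hw₀0 hw₀M (r - 1) hd1
    have hJm' : J m' = Submodule.span F {v} := by
      have hJm'0 : J m' = chainC F X Y w₀ (m' - (m + 1)) := by
        simp only [hJdef, if_neg (by omega : ¬ m' ≤ m), if_pos le_rfl]
      rw [hJm'0, (by omega : m' - (m + 1) = r - 1), hveq]
    have hLM : Lcomp F X Y m' = (Mc m').restrictScalars F := hfull m' (by omega)
    have hproj : (Mc m').restrictScalars F ≤ Submodule.span F {v} := by
      intro x hx
      have hxI : x ∈ (⨆ k, J k : Submodule F M) := h2 (by rw [hLM]; exact hx)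
      have hxn : x ∈ Mc m' := hx
      have hp := proj_component hM hJ_le_Mc hxI hxn
      rwa [hJm'] at hp
    have hsub : Submodule.span F ({v} : Set M) ≤ (Mc m').restrictScalars F := by
      apply Submodule.span_le.2
      intro z hz
      rw [Set.mem_singleton_iff] at hz
      rw [hz]
      have harith : m' = m + 1 + (r - 1) := by omega
      rw [harith]
      exact hvM
    have heq2 : (Mc m').restrictScalars F = Submodule.span F {v} := le_antisymm hproj hsub
    have hfr2 := finrank_McF hM hEF (F := F) (by omega : 2 ≤ m')
    rw [heq2, finrank_span_singleton hv0] at hfr2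
    omega
  · have hw₀pow : w₀ ∈ Lpow F X Y (m + 2) := Lpow_antitone (by omega) (hIle hw₀I)
    exact hw₀0 (mem_Lpow_eq_zero hM hX hY hw₀M hw₀pow)

end Aux2


/-- assume `[E : F] = 2`, the sequence `(d_i)_{i ≥ 2}` is not constant,
`D₀ = {i ≥ 2 : d_i = 0}` is infinite, and the consecutive differences of the elements of
`D₀` are bounded with maximum `r`.  Then `L` is ideally `r`-constrained but not ideally
`(r - 1)`-constrained. -/
theorem stmt_13 (E : Type*) [Field E] (M : Type*) [LieRing M] [LieAlgebra E M]
    (Mc : ℕ → Submodule E M) (hM : IsMaximalClass E M Mc)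
    (F : Type*) [Field F] [Algebra F E] [LieAlgebra F M] [IsScalarTower F E M]
    (hEF : Module.finrank F E = 2)
    (X Y : M) (hX : X ∈ Mc 1) (hY : Y ∈ Mc 1) (hXY : LinearIndependent E ![X, Y])
    (hnc : ∃ i j : ℕ, 2 ≤ i ∧ 2 ≤ j ∧ dSeq E Mc F X Y i ≠ dSeq E Mc F X Y j)
    (D₀ : ℕ → Prop) (hD₀ : ∀ i, D₀ i ↔ 2 ≤ i ∧ dSeq E Mc F X Y i = 0)
    (hinf : (setOf D₀).Infinite)
    (r : ℕ) (hrub : ∀ j : ℕ, Nat.nth D₀ (j + 1) - Nat.nth D₀ j ≤ r)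
    (hrmax : ∃ j : ℕ, Nat.nth D₀ (j + 1) - Nat.nth D₀ j = r) :
    IdeallyConstrained F X Y r ∧ ¬ IdeallyConstrained F X Y (r - 1) := by
  exact ⟨part1 hM hEF hX hY hXY hD₀ hinf (r_pos hinf hrmax) hrub,
    part2 hM hEF hX hY hXY hD₀ hinf hrmax⟩
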